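/- For even n = 2m ≥ 4, the identity L_{2m}(x) = Σ_{i<j}(x_i−x_j)²·(−(x₁+...+x_{2m}) + m(x_i+x_j))² holds; in particular L_{2m} is a sum of squares. -/

import Mathlib

open Finset MvPolynomial

lemma double_half {n : ℕ} (g : Fin n → Fin n → ℝ) (hsym : ∀ i j, g i j = g j i)
    (hdiag : ∀ i, g i i = 0) :
    ∑ i, ∑ j ∈ Ioi i, g i j = (∑ i, ∑ j, g i j) / 2 := by
  have h := Finset.sum_sum_Ioi_add_eq_sum_sum_off_diag (f := g)
  have h1 : ∑ i, ∑ j ∈ Ioi i, (g j i + g i j) = 2 * ∑ i, ∑ j ∈ Ioi i, g i j := by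
    rw [Finset.mul_sum]
    refine Finset.sum_congr rfl fun i _ => ?_
    rw [Finset.mul_sum]
    exact Finset.sum_congr rfl fun j _ => by rw [hsym j i]; ring
  have key : 2 * (∑ i, ∑ j ∈ Ioi i, g i j) = ∑ i, ∑ j, g i j := by
    rw [← h1, h]
    refine (Finset.sum_congr rfl fun i _ => ?_).trans (Finset.sum_comm)
    refine Finset.sum_subset (Finset.subset_univ _) (fun x _ hx => ?_)
    have : x = i := by simpa using hx
    rw [this]; exact hdiag i
  linarith

lemma core (m : ℕ) (x : Fin (2 * m) → ℝ) :
    (m * m : ℝ) * (∑ i, ∑ j ∈ Ioi i, (x i - x j) ^ 4) -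
      (∑ i, ∑ j ∈ Ioi i, (x i - x j) ^ 2) ^ 2 =
    ∑ i, ∑ j ∈ Ioi i,
      ((x i - x j) * (-(∑ l, x l) + (m : ℝ) * (x i + x j))) ^ 2 := by
  set s : ℝ := ∑ l, x l with hs
  set p2 : ℝ := ∑ l, (x l) ^ 2 with hp2
  set p3 : ℝ := ∑ l, (x l) ^ 3 with hp3
  set p4 : ℝ := ∑ l, (x l) ^ 4 with hp4
  have osum : ∀ c4 c3 c2 c1 c0 : ℝ,
      ∑ j : Fin (2 * m), (c4 * (x j) ^ 4 + c3 * (x j) ^ 3 + c2 * (x j) ^ 2 + c1 * (x j) + c0)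
        = c4 * p4 + c3 * p3 + c2 * p2 + c1 * s + (2 * m : ℝ) * c0 := by
    intro c4 c3 c2 c1 c0
    rw [hs, hp2, hp3, hp4]
    simp only [Finset.sum_add_distrib, ← Finset.mul_sum, Finset.sum_const,
      Finset.card_univ, Fintype.card_fin, nsmul_eq_mul]
    push_cast
    ring
  -- quartic sum
  have h4 : ∑ i, ∑ j ∈ Ioi i, (x i - x j) ^ 4
      = (2 * (2 * m : ℝ) * p4 - 8 * p3 * s + 6 * p2 ^ 2) / 2 := by
    rw [double_half _ (fun i j => by ring) (fun i => by ring)]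
    congr 1
    have inner : ∀ a : ℝ, ∑ j, (a - x j) ^ 4
        = 1 * p4 + (-4 * a) * p3 + (6 * a ^ 2) * p2 + (-4 * a ^ 3) * s + (2 * m : ℝ) * a ^ 4 := by
      intro a
      rw [Finset.sum_congr rfl (fun j _ => show (a - x j) ^ 4
        = 1 * (x j) ^ 4 + (-4 * a) * (x j) ^ 3 + (6 * a ^ 2) * (x j) ^ 2 + (-4 * a ^ 3) * (x j)
          + a ^ 4 from by ring), osum]
    rw [Finset.sum_congr rfl (fun i _ => inner (x i))]
    rw [Finset.sum_congr rfl (fun i _ => show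
      1 * p4 + (-4 * (x i)) * p3 + (6 * (x i) ^ 2) * p2 + (-4 * (x i) ^ 3) * s + (2 * m : ℝ) * (x i) ^ 4
      = (2 * m : ℝ) * (x i) ^ 4 + (-4 * s) * (x i) ^ 3 + (6 * p2) * (x i) ^ 2 + (-4 * p3) * (x i)
        + 1 * p4 from by ring), osum]
    ring
  -- quadratic sum
  have h2 : ∑ i, ∑ j ∈ Ioi i, (x i - x j) ^ 2
      = (2 * (2 * m : ℝ) * p2 - 2 * s ^ 2) / 2 := by
    rw [double_half _ (fun i j => by ring) (fun i => by ring)]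
    congr 1
    have inner : ∀ a : ℝ, ∑ j, (a - x j) ^ 2
        = 0 * p4 + 0 * p3 + 1 * p2 + (-2 * a) * s + (2 * m : ℝ) * a ^ 2 := by
      intro a
      rw [Finset.sum_congr rfl (fun j _ => show (a - x j) ^ 2
        = 0 * (x j) ^ 4 + 0 * (x j) ^ 3 + 1 * (x j) ^ 2 + (-2 * a) * (x j) + a ^ 2 from by ring),
        osum]
    rw [Finset.sum_congr rfl (fun i _ => inner (x i))]
    rw [Finset.sum_congr rfl (fun i _ => show
      0 * p4 + 0 * p3 + 1 * p2 + (-2 * (x i)) * s + (2 * m : ℝ) * (x i) ^ 2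
      = 0 * (x i) ^ 4 + 0 * (x i) ^ 3 + (2 * m : ℝ) * (x i) ^ 2 + (-2 * s) * (x i) + p2
        from by ring), osum]
    ring
  -- RHS sum
  have hR : ∑ i, ∑ j ∈ Ioi i, ((x i - x j) * (-s + (m : ℝ) * (x i + x j))) ^ 2
      = ((2 * (m : ℝ) ^ 3) * p4 + (-4 * (m : ℝ) ^ 2 * s) * p3
         + (-2 * (m : ℝ) ^ 2 * p2 + 4 * (m : ℝ) * s ^ 2) * p2
         + (2 * (m : ℝ) * s * p2 - 2 * s ^ 3) * s
         + (2 * m : ℝ) * ((m : ℝ) ^ 2 * p4 - 2 * s * (m : ℝ) * p3 + s ^ 2 * p2)) / 2 := by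
    rw [double_half _ (fun i j => by ring) (fun i => by ring)]
    congr 1
    have inner : ∀ a : ℝ, ∑ j, ((a - x j) * (-s + (m : ℝ) * (a + x j))) ^ 2
        = ((m : ℝ) ^ 2) * p4 + (-2 * s * (m : ℝ)) * p3
          + (s ^ 2 - 2 * ((m : ℝ) * a ^ 2 - s * a) * (m : ℝ)) * p2
          + (2 * ((m : ℝ) * a ^ 2 - s * a) * s) * s
          + (2 * m : ℝ) * ((m : ℝ) * a ^ 2 - s * a) ^ 2 := by
      intro a
      rw [Finset.sum_congr rfl (fun j _ => show ((a - x j) * (-s + (m : ℝ) * (a + x j))) ^ 2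
        = ((m : ℝ) ^ 2) * (x j) ^ 4 + (-2 * s * (m : ℝ)) * (x j) ^ 3
          + (s ^ 2 - 2 * ((m : ℝ) * a ^ 2 - s * a) * (m : ℝ)) * (x j) ^ 2
          + (2 * ((m : ℝ) * a ^ 2 - s * a) * s) * (x j)
          + ((m : ℝ) * a ^ 2 - s * a) ^ 2 from by ring), osum]
    rw [Finset.sum_congr rfl (fun i _ => inner (x i))]
    rw [Finset.sum_congr rfl (fun i _ => show
      ((m : ℝ) ^ 2) * p4 + (-2 * s * (m : ℝ)) * p3
        + (s ^ 2 - 2 * ((m : ℝ) * (x i) ^ 2 - s * (x i)) * (m : ℝ)) * p2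
        + (2 * ((m : ℝ) * (x i) ^ 2 - s * (x i)) * s) * s
        + (2 * m : ℝ) * ((m : ℝ) * (x i) ^ 2 - s * (x i)) ^ 2
      = (2 * (m : ℝ) ^ 3) * (x i) ^ 4 + (-4 * (m : ℝ) ^ 2 * s) * (x i) ^ 3
        + (-2 * (m : ℝ) ^ 2 * p2 + 4 * (m : ℝ) * s ^ 2) * (x i) ^ 2
        + (2 * (m : ℝ) * s * p2 - 2 * s ^ 3) * (x i)
        + ((m : ℝ) ^ 2 * p4 - 2 * s * (m : ℝ) * p3 + s ^ 2 * p2)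
        from by ring), osum]
  rw [h4, h2, hR]
  ring


/-- For even `n = 2m ≥ 4`, the identity
`L_{2m} = ∑_{i<j} ((Xᵢ−Xⱼ)(−(X₁+⋯+X_{2m}) + m(Xᵢ+Xⱼ)))²` holds;
in particular `L_{2m}` is a sum of squares. -/
theorem stmt11 (m : ℕ) (hm : 2 ≤ m) :
    ((C (m * m : ℝ)) * (∑ i : Fin (2 * m), ∑ j ∈ Ioi i, (X i - X j) ^ 4) -
        (∑ i : Fin (2 * m), ∑ j ∈ Ioi i, (X i - X j) ^ 2) ^ 2 =
      ∑ i : Fin (2 * m), ∑ j ∈ Ioi i,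
        ((X i - X j) * (-(∑ l : Fin (2 * m), X l) + (C (m : ℝ)) * (X i + X j))) ^ 2) ∧
    ∃ (k : ℕ) (h : Fin k → MvPolynomial (Fin (2 * m)) ℝ),
      (C (m * m : ℝ)) * (∑ i : Fin (2 * m), ∑ j ∈ Ioi i, (X i - X j) ^ 4) -
        (∑ i : Fin (2 * m), ∑ j ∈ Ioi i, (X i - X j) ^ 2) ^ 2 = ∑ t, (h t) ^ 2 := by
  have hid : (C (m * m : ℝ)) * (∑ i : Fin (2 * m), ∑ j ∈ Ioi i, (X i - X j) ^ 4) -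
        (∑ i : Fin (2 * m), ∑ j ∈ Ioi i, (X i - X j) ^ 2) ^ 2 =
      ∑ i : Fin (2 * m), ∑ j ∈ Ioi i,
        ((X i - X j) * (-(∑ l : Fin (2 * m), X l) + (C (m : ℝ)) * (X i + X j))) ^ 2 := by
    apply MvPolynomial.funext
    intro x
    simp only [map_sum, map_sub, map_mul, map_pow, map_add, map_neg, eval_X, eval_C]
    exact core m x
  refine ⟨hid, ?_⟩
  rw [hid]
  classical
  refine ⟨(2 * m) * (2 * m), fun t =>
    (fun p : Fin (2 * m) × Fin (2 * m) =>
      if p.1 < p.2 then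
        (X p.1 - X p.2) * (-(∑ l : Fin (2 * m), X l) + (C (m : ℝ)) * (X p.1 + X p.2))
      else 0) (finProdFinEquiv.symm t), ?_⟩
  rw [Equiv.sum_comp (finProdFinEquiv.symm) (fun p : Fin (2 * m) × Fin (2 * m) =>
    ((if p.1 < p.2 then
        (X p.1 - X p.2) * (-(∑ l : Fin (2 * m), X l) + (C (m : ℝ)) * (X p.1 + X p.2))
      else 0) ^ 2))]
  rw [Fintype.sum_prod_type]
  refine Finset.sum_congr rfl fun i _ => ?_
  symm
  simp only [apply_ite (fun z : MvPolynomial (Fin (2 * m)) ℝ => z ^ 2), ne_eq,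
    OfNat.ofNat_ne_zero, not_false_eq_true, zero_pow]
  rw [← Finset.sum_filter, Finset.filter_lt_eq_Ioi]
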